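/- Fix q ∈ ℝ. Let φ : ℝ → ℝ be a C¹, odd, 2π-periodic function and let w : ℝ → ℝ be a continuous 2π-periodic function satisfying w(τ) = −w(−τ−2q) for all τ. Define F(τ) = V''(−φ(τ))w(τ) + V''(φ(τ))w(τ−2q). Then F(−τ) = −F(τ) for all τ ∈ ℝ, and consequently ∫_{−π}^{π} φ̇(τ)F(τ)dτ = 0. -/

import Mathlib

open Real

/-- Second derivative of the Hertzian potential: `V''(x) = (3/2)(max(-x,0))^(1/2)`. -/
noncomputable def V'' (x : ℝ) : ℝ := (3/2) * (max (-x) 0) ^ ((1:ℝ)/2)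

lemma V''_continuous : Continuous V'' := by
  unfold V''
  exact continuous_const.mul (((continuous_neg).max continuous_const).rpow_const
    (fun x => Or.inr (by norm_num)))

/-- The source term `F_u^{(2)}(τ) = V''(-φ(τ))w(τ) + V''(φ(τ))w(τ-2q)` of the
second-order perturbation equation is odd, hence satisfies the Fredholm
orthogonality condition against `φ̇`. -/
theorem second_fredholm_condition
    (q : ℝ) (φ : ℝ → ℝ) (hφ : ContDiff ℝ 1 φ)
    (hφodd : ∀ τ, φ (-τ) = -φ τ)
    (hφper : Function.Periodic φ (2 * π))
    (w : ℝ → ℝ) (hw : Continuous w)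
    (hwper : Function.Periodic w (2 * π))
    (hsym : ∀ τ, w τ = -w (-τ - 2 * q)) :
    (∀ τ, V'' (-φ (-τ)) * w (-τ) + V'' (φ (-τ)) * w (-τ - 2 * q)
        = -(V'' (-φ τ) * w τ + V'' (φ τ) * w (τ - 2 * q))) ∧
    (∫ τ in (-π)..π,
        deriv φ τ * (V'' (-φ τ) * w τ + V'' (φ τ) * w (τ - 2 * q))) = 0 := by
  have hwneg : ∀ τ, w (-τ) = -w (τ - 2 * q) := by
    intro τ
    have := hsym (τ - 2 * q)
    rw [this]; ring_nf
  have hwneg2 : ∀ τ, w (-τ - 2 * q) = -w τ := by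
    intro τ
    have := hsym τ
    rw [this]; ring
  have hodd : ∀ τ, V'' (-φ (-τ)) * w (-τ) + V'' (φ (-τ)) * w (-τ - 2 * q)
      = -(V'' (-φ τ) * w τ + V'' (φ τ) * w (τ - 2 * q)) := by
    intro τ
    rw [hφodd, hwneg, hwneg2, neg_neg]
    ring
  refine ⟨hodd, ?_⟩
  -- deriv φ is even
  have hderiv_even : ∀ τ, deriv φ (-τ) = deriv φ τ := by
    intro τ
    have h1 : deriv (fun x => φ (-x)) τ = -deriv φ (-τ) := deriv_comp_neg φ τ
    have h2 : (fun x => φ (-x)) = fun x => -φ x := funext hφodd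
    rw [h2] at h1
    have hd : DifferentiableAt ℝ φ τ := (hφ.differentiable one_ne_zero).differentiableAt
    rw [deriv.fun_neg] at h1
    linarith [h1]
  set F : ℝ → ℝ := fun τ => deriv φ τ * (V'' (-φ τ) * w τ + V'' (φ τ) * w (τ - 2 * q)) with hF
  have hFodd : ∀ τ, F (-τ) = -F τ := by
    intro τ
    simp only [hF, hderiv_even τ, hodd τ]
    ring
  have hcont : Continuous F := by
    apply ((hφ.continuous_deriv le_rfl)).mul
    exact ((V''_continuous.comp (hφ.continuous.neg)).mul hw).add
      ((V''_continuous.comp hφ.continuous).mul (hw.comp (continuous_id.sub continuous_const)))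
  have hsplit : (∫ τ in (-π)..π, F τ) = (∫ τ in (-π)..(0:ℝ), F τ) + ∫ τ in (0:ℝ)..π, F τ :=
    (intervalIntegral.integral_add_adjacent_intervals
      (hcont.intervalIntegrable _ _) (hcont.intervalIntegrable _ _)).symm
  have hneg : (∫ τ in (-π)..(0:ℝ), F τ) = -∫ τ in (0:ℝ)..π, F τ := by
    have := intervalIntegral.integral_comp_neg (a := (0:ℝ)) (b := π) (f := F)
    rw [neg_zero] at this
    rw [← this]
    rw [show (∫ x in (0:ℝ)..π, F (-x)) = ∫ x in (0:ℝ)..π, -F x from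
      intervalIntegral.integral_congr (fun x _ => hFodd x)]
    rw [intervalIntegral.integral_neg]
  rw [hsplit, hneg, neg_add_cancel]
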